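/- arXiv:1106.2095 — 3 statements merged into one kernel-verified Lean document; each statement's English description precedes it below -/
import Mathlib

section
/- Let ℙ be a probability measure on a filtered probability space with discrete filtration (𝓕_k)_{k=0}^n, let S(k) be an adapted integrable process, γ a predictable process with γ(0) = 0, and g(k, ·) an 𝓕_k-measurable convex cost function with dual G(k, y) = sup_ν (νy − g(k,ν)). If the wealth process Y with Y(0)=x and Y(k+1) = Y(k) + γ(k+1)(S(k+1) − S(k)) − g(k, γ(k+1)−γ(k)) satisfies Y(n) ≥ F ℙ-a.s. for an integrable random variable F, then x ≥ 𝔼^ℙ[ F − Σ_{k=0}^{n−1} G(k, 𝔼^ℙ[S(n)|𝓕_k] − S(k)) ]. -/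
open MeasureTheory

private lemma abel_sum (a b : ℕ → ℝ) (ha : a 0 = 0) (n : ℕ) :
    ∑ k ∈ Finset.range n, a (k + 1) * (b (k + 1) - b k)
      = ∑ k ∈ Finset.range n, (a (k + 1) - a k) * (b n - b k) := by
  induction n with
  | zero => simp
  | succ n ih =>
    rw [Finset.sum_range_succ, ih, Finset.sum_range_succ]
    have h : ∑ k ∈ Finset.range n, (a (k + 1) - a k) * (b (n + 1) - b k)
        = ∑ k ∈ Finset.range n,
            ((a (k + 1) - a k) * (b n - b k) + (a (k + 1) - a k) * (b (n + 1) - b n)) := by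
      refine Finset.sum_congr rfl fun k _ => by ring
    rw [h, Finset.sum_add_distrib, ← Finset.sum_mul]
    have htel : ∑ k ∈ Finset.range n, (a (k + 1) - a k) = a n := by
      rw [Finset.sum_range_sub a, ha, sub_zero]
    rw [htel]; ring

/-- Weak duality for the discrete-time market with friction: if the wealth process `Y`
with initial capital `x`, predictable strategy `γ` and convex trading cost `g`
super-replicates `F` a.s., then `x` dominates the dual value
`𝔼[F − Σ_k G(k, 𝔼[S n | 𝓕 k] − S k)]`, where `G(k,·)` dominates the convex conjugate of
`g(k,·)` (all relevant random variables being assumed integrable). -/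
theorem weak_duality_discrete_friction
    {Ω : Type*} {m : MeasurableSpace Ω} (ℙ : Measure Ω) [IsProbabilityMeasure ℙ]
    (n : ℕ) (𝓕 : Filtration ℕ m)
    (S : ℕ → Ω → ℝ)
    (hSadapted : ∀ k, StronglyMeasurable[𝓕 k] (S k))
    (hSint : ∀ k, Integrable (S k) ℙ)
    (γ : ℕ → Ω → ℝ) (hγ0 : ∀ ω, γ 0 ω = 0)
    (hγpred : ∀ k, StronglyMeasurable[𝓕 k] (γ (k + 1)))
    (g G : ℕ → Ω → ℝ → ℝ)
    (hg0 : ∀ k ω, g k ω 0 = 0)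
    (hgnn : ∀ k ω ν, 0 ≤ g k ω ν)
    (hgconv : ∀ k ω, ConvexOn ℝ Set.univ (g k ω))
    (hconj : ∀ k ω ν y, ν * y - g k ω ν ≤ G k ω y)
    (hGint : ∀ k, Integrable (fun ω => G k ω ((ℙ[S n | 𝓕 k]) ω - S k ω)) ℙ)
    (hprodint : ∀ k, Integrable (fun ω => (γ (k + 1) ω - γ k ω) * (S n ω - S k ω)) ℙ)
    (hprodint' : ∀ k,
      Integrable (fun ω => (γ (k + 1) ω - γ k ω) * ((ℙ[S n | 𝓕 k]) ω - S k ω)) ℙ)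
    (x : ℝ) (Y : ℕ → Ω → ℝ) (hY0 : ∀ ω, Y 0 ω = x)
    (hYrec : ∀ k < n, ∀ ω,
      Y (k + 1) ω = Y k ω + γ (k + 1) ω * (S (k + 1) ω - S k ω)
        - g k ω (γ (k + 1) ω - γ k ω))
    (F : Ω → ℝ) (hFint : Integrable F ℙ)
    (hsuper : ∀ᵐ ω ∂ℙ, F ω ≤ Y n ω) :
    (∫ ω, (F ω - ∑ k ∈ Finset.range n, G k ω ((ℙ[S n | 𝓕 k]) ω - S k ω)) ∂ℙ) ≤ x := by
  -- notation for the dual variables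
  set E : ℕ → Ω → ℝ := fun k => ℙ[S n | 𝓕 k] with hE
  -- Δγ is 𝓕 k measurable
  have hΔγmeas : ∀ k, StronglyMeasurable[𝓕 k] (fun ω => γ (k + 1) ω - γ k ω) := by
    intro k
    refine (hγpred k).sub ?_
    cases k with
    | zero =>
        have h0 : γ 0 = fun _ => (0 : ℝ) := funext hγ0
        rw [h0]; exact stronglyMeasurable_const
    | succ k => exact (hγpred k).mono (𝓕.mono (Nat.le_succ k))
  -- explicit formula for Y
  have hYformula : ∀ mm ≤ n, ∀ ω, Y mm ω
      = x + ∑ k ∈ Finset.range mm,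
          (γ (k + 1) ω * (S (k + 1) ω - S k ω) - g k ω (γ (k + 1) ω - γ k ω)) := by
    intro mm
    induction mm with
    | zero => intro _ ω; simp [hY0]
    | succ mm ih =>
        intro hmm ω
        rw [hYrec mm (by omega) ω, ih (by omega) ω, Finset.sum_range_succ]
        ring
  -- pointwise bound a.e.
  have hpt : ∀ᵐ ω ∂ℙ, F ω ≤ x + ∑ k ∈ Finset.range n,
      ((γ (k + 1) ω - γ k ω) * (S n ω - S k ω)
        - (γ (k + 1) ω - γ k ω) * (E k ω - S k ω)
        + G k ω (E k ω - S k ω)) := by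
    filter_upwards [hsuper] with ω hω
    have h1 : Y n ω = x + ∑ k ∈ Finset.range n,
        ((γ (k + 1) ω - γ k ω) * (S n ω - S k ω) - g k ω (γ (k + 1) ω - γ k ω)) := by
      rw [hYformula n le_rfl ω]
      have := abel_sum (fun k => γ k ω) (fun k => S k ω) (hγ0 ω) n
      simp only [Finset.sum_sub_distrib]
      rw [this]
    refine hω.trans ?_
    rw [h1]
    refine add_le_add (le_refl x) (Finset.sum_le_sum fun k _ => ?_)
    have := hconj k ω (γ (k + 1) ω - γ k ω) (E k ω - S k ω)
    linarith
  -- integrability of the RHS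
  have hterm : ∀ k, Integrable (fun ω =>
      (γ (k + 1) ω - γ k ω) * (S n ω - S k ω)
        - (γ (k + 1) ω - γ k ω) * (E k ω - S k ω)
        + G k ω (E k ω - S k ω)) ℙ := by
    intro k
    exact ((hprodint k).sub (hprodint' k)).add (hGint k)
  have hTint : Integrable (fun ω => ∑ k ∈ Finset.range n,
      ((γ (k + 1) ω - γ k ω) * (S n ω - S k ω)
        - (γ (k + 1) ω - γ k ω) * (E k ω - S k ω)
        + G k ω (E k ω - S k ω))) ℙ :=
    integrable_finset_sum _ fun k _ => hterm k
  have hRHSint : Integrable (fun ω => x + ∑ k ∈ Finset.range n,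
      ((γ (k + 1) ω - γ k ω) * (S n ω - S k ω)
        - (γ (k + 1) ω - γ k ω) * (E k ω - S k ω)
        + G k ω (E k ω - S k ω))) ℙ :=
    (integrable_const x).add hTint
  -- key equality of integrals via conditional expectation
  have hkey : ∀ k, ∫ ω, (γ (k + 1) ω - γ k ω) * (S n ω - S k ω) ∂ℙ
      = ∫ ω, (γ (k + 1) ω - γ k ω) * (E k ω - S k ω) ∂ℙ := by
    intro k
    have hle : 𝓕 k ≤ m := 𝓕.le k
    have hSnk : Integrable (fun ω => S n ω - S k ω) ℙ := (hSint n).sub (hSint k)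
    have hmul : ℙ[(fun ω => γ (k + 1) ω - γ k ω) * (fun ω => S n ω - S k ω) | 𝓕 k]
        =ᵐ[ℙ] (fun ω => γ (k + 1) ω - γ k ω) * ℙ[(fun ω => S n ω - S k ω) | 𝓕 k] :=
      condExp_mul_of_stronglyMeasurable_left (hΔγmeas k) (hprodint k) hSnk
    have hSk : ℙ[S k | 𝓕 k] = S k :=
      condExp_of_stronglyMeasurable hle (hSadapted k) (hSint k)
    have hsub : ℙ[(fun ω => S n ω - S k ω) | 𝓕 k]
        =ᵐ[ℙ] fun ω => E k ω - S k ω := by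
      have h1 : ℙ[(fun ω => S n ω - S k ω) | 𝓕 k] =ᵐ[ℙ] ℙ[S n | 𝓕 k] - ℙ[S k | 𝓕 k] :=
        condExp_sub (hSint n) (hSint k) _
      refine h1.trans ?_
      rw [hSk]
      filter_upwards with ω
      simp [hE]
    calc ∫ ω, (γ (k + 1) ω - γ k ω) * (S n ω - S k ω) ∂ℙ
        = ∫ ω, (ℙ[(fun ω => γ (k + 1) ω - γ k ω) * (fun ω => S n ω - S k ω) | 𝓕 k]) ω ∂ℙ :=
          (integral_condExp hle).symm
      _ = ∫ ω, (γ (k + 1) ω - γ k ω) * (E k ω - S k ω) ∂ℙ := by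
          refine integral_congr_ae ?_
          filter_upwards [hmul, hsub] with ω h1 h2
          rw [h1]
          simp only [Pi.mul_apply]
          rw [h2]
  -- integrate the pointwise bound
  have hmono : ∫ ω, F ω ∂ℙ ≤ ∫ ω, (x + ∑ k ∈ Finset.range n,
      ((γ (k + 1) ω - γ k ω) * (S n ω - S k ω)
        - (γ (k + 1) ω - γ k ω) * (E k ω - S k ω)
        + G k ω (E k ω - S k ω))) ∂ℙ :=
    integral_mono_ae hFint hRHSint hpt
  have hGsumint : Integrable (fun ω => ∑ k ∈ Finset.range n, G k ω (E k ω - S k ω)) ℙ :=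
    integrable_finset_sum _ fun k _ => hGint k
  have hsplit : ∫ ω, (x + ∑ k ∈ Finset.range n,
      ((γ (k + 1) ω - γ k ω) * (S n ω - S k ω)
        - (γ (k + 1) ω - γ k ω) * (E k ω - S k ω)
        + G k ω (E k ω - S k ω))) ∂ℙ
      = x + ∑ k ∈ Finset.range n,
          (∫ ω, (γ (k + 1) ω - γ k ω) * (S n ω - S k ω) ∂ℙ
            - ∫ ω, (γ (k + 1) ω - γ k ω) * (E k ω - S k ω) ∂ℙ
            + ∫ ω, G k ω (E k ω - S k ω) ∂ℙ) := by
    rw [integral_add (integrable_const x) hTint,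
      integral_const, measureReal_def, measure_univ, ENNReal.toReal_one, smul_eq_mul, one_mul,
      integral_finset_sum _ (fun k _ => hterm k)]
    congr 1
    refine Finset.sum_congr rfl fun k _ => ?_
    have ha : Integrable (fun ω => (γ (k + 1) ω - γ k ω) * (S n ω - S k ω)
        - (γ (k + 1) ω - γ k ω) * (E k ω - S k ω)) ℙ := (hprodint k).sub (hprodint' k)
    rw [integral_add ha (hGint k), integral_sub (hprodint k) (hprodint' k)]
  have hcancel : ∑ k ∈ Finset.range n,
      (∫ ω, (γ (k + 1) ω - γ k ω) * (S n ω - S k ω) ∂ℙ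
        - ∫ ω, (γ (k + 1) ω - γ k ω) * (E k ω - S k ω) ∂ℙ
        + ∫ ω, G k ω (E k ω - S k ω) ∂ℙ)
      = ∑ k ∈ Finset.range n, ∫ ω, G k ω (E k ω - S k ω) ∂ℙ := by
    refine Finset.sum_congr rfl fun k _ => ?_
    rw [hkey k]; ring
  have hfinal : ∫ ω, F ω ∂ℙ ≤ x + ∑ k ∈ Finset.range n, ∫ ω, G k ω (E k ω - S k ω) ∂ℙ := by
    rw [← hcancel, ← hsplit]; exact hmono
  rw [integral_sub hFint hGsumint, integral_finset_sum _ fun k _ => hGint k]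
  linarith
end

section
/- Let ℙ be a probability measure on Ω = {−1,1}^n with filtration 𝓕_k, S(k) = s₀ exp(σ n^{−1/2} Σ_{i=1}^k ξ_i) with s₀, σ > 0, and M(k) = 𝔼^ℙ[S(n)|𝓕_k]. If |M(k) − S(k)| ≤ (c/√n) S(k) ℙ-a.s. for all k ≤ n, then |M(k+1) − M(k)| ≤ (c₁/√n) S(k) ℙ-a.s. for some constant c₁ depending only on c and σ (for all n large enough). -/
open MeasureTheory

set_option maxHeartbeats 1000000

/-- If the martingale `M k = 𝔼[S n | 𝓕 k]` stays within relative distance `c/√n` of the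
binomial price process `S k = s₀ exp(σ n^{−1/2} Σ_{i≤k} ξ_i)`, then its increments satisfy
`|M (k+1) − M k| ≤ (c₁/√n) S k` a.s., for a constant `c₁` depending only on `c` and `σ`,
for all `n` large enough. -/
theorem martingale_increment_bound (c σ : ℝ) (hc : 0 < c) (hσ : 0 < σ) :
    ∃ c₁ : ℝ, 0 < c₁ ∧ ∃ N : ℕ, ∀ n : ℕ, N ≤ n →
      ∀ (Ω : Type) (mΩ : MeasurableSpace Ω) (ℙ : @Measure Ω mΩ),
      IsProbabilityMeasure ℙ →
      ∀ (𝓕 : Filtration ℕ mΩ) (ξ : ℕ → Ω → ℝ) (s₀ : ℝ), 0 < s₀ →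
      (∀ i ω, ξ i ω = 1 ∨ ξ i ω = -1) →
      (∀ i, StronglyMeasurable[𝓕 i] (ξ i)) →
      ∀ S M : ℕ → Ω → ℝ,
      (∀ k ω, S k ω =
        s₀ * Real.exp (σ / Real.sqrt n * ∑ i ∈ Finset.range k, ξ (i + 1) ω)) →
      (∀ k, M k =ᵐ[ℙ] ℙ[S n | 𝓕 k]) →
      (∀ k ≤ n, ∀ᵐ ω ∂ℙ, |M k ω - S k ω| ≤ c / Real.sqrt n * S k ω) →
      ∀ k < n, ∀ᵐ ω ∂ℙ, |M (k + 1) ω - M k ω| ≤ c₁ / Real.sqrt n * S k ω := by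
  refine ⟨(c + σ) * Real.exp σ + c, by positivity, 1, ?_⟩
  intro n hn Ω mΩ ℙ hℙ 𝓕 ξ s₀ hs₀ hξ hξm S M hS hM hbound k hk
  have h1 := hbound k hk.le
  have h2 := hbound (k + 1) hk
  filter_upwards [h1, h2] with ω hω1 hω2
  set t := Real.sqrt n with ht
  have ht1 : 1 ≤ t := by
    rw [ht]
    have : (1 : ℝ) ≤ (n : ℝ) := by exact_mod_cast hn
    nlinarith [Real.sq_sqrt (by positivity : (0:ℝ) ≤ (n:ℝ)), Real.sqrt_nonneg (n:ℝ)]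
  have ht0 : (0 : ℝ) < t := lt_of_lt_of_le one_pos ht1
  have hSpos : 0 < S k ω := by rw [hS]; positivity
  have hstep : S (k + 1) ω = S k ω * Real.exp (σ / t * ξ (k + 1) ω) := by
    rw [hS, hS, Finset.sum_range_succ, mul_add, Real.exp_add, mul_assoc]
  set x := σ / t with hxdef
  have hx0 : 0 < x := by positivity
  have hxσ : x ≤ σ := div_le_self hσ.le ht1
  have hexσ : Real.exp x ≤ Real.exp σ := Real.exp_le_exp.mpr hxσ
  have hprod : Real.exp (-x) * Real.exp x = 1 := by
    rw [← Real.exp_add]; simp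
  have key1 : Real.exp x - 1 ≤ x * Real.exp x := by
    nlinarith [Real.add_one_le_exp (-x), Real.exp_pos x]
  have key2 : 1 - Real.exp (-x) ≤ x := by
    nlinarith [Real.add_one_le_exp (-x)]
  have hexpσ : Real.exp (x * ξ (k + 1) ω) ≤ Real.exp σ := by
    apply Real.exp_le_exp.mpr
    rcases hξ (k + 1) ω with h | h <;> rw [h] <;> nlinarith
  have hdiff : |S (k + 1) ω - S k ω| ≤ x * Real.exp σ * S k ω := by
    rw [hstep]
    rcases hξ (k + 1) ω with h | h <;> rw [h]
    · rw [mul_one]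
      rw [abs_of_nonneg (by nlinarith [Real.add_one_le_exp x] : (0:ℝ) ≤ S k ω * Real.exp x - S k ω)]
      have h3 : Real.exp x - 1 ≤ x * Real.exp σ := le_trans key1 (by nlinarith)
      linarith [mul_le_mul_of_nonneg_left h3 hSpos.le]
    · rw [mul_neg_one]
      have hle1 : Real.exp (-x) ≤ 1 := by
        rw [Real.exp_le_one_iff]; linarith
      rw [abs_of_nonpos (by nlinarith : S k ω * Real.exp (-x) - S k ω ≤ 0)]
      have h3 : 1 - Real.exp (-x) ≤ x * Real.exp σ := by
        have := Real.one_le_exp hσ.le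
        nlinarith
      linarith [mul_le_mul_of_nonneg_left h3 hSpos.le]
  have hS1pos : 0 < S (k + 1) ω := by rw [hS]; positivity
  have htri : |M (k + 1) ω - M k ω| ≤
      |M (k + 1) ω - S (k + 1) ω| + |S (k + 1) ω - S k ω| + |S k ω - M k ω| := by
    have h := abs_sub_le (M (k + 1) ω) (S (k + 1) ω) (M k ω)
    have h' := abs_sub_le (S (k + 1) ω) (S k ω) (M k ω)
    linarith
  have hSk1 : S (k + 1) ω ≤ Real.exp σ * S k ω := by
    rw [hstep]; nlinarith
  have hω1' : |S k ω - M k ω| ≤ c / t * S k ω := by rw [abs_sub_comm]; exact hω1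
  have hct : 0 < c / t := by positivity
  calc |M (k + 1) ω - M k ω|
      ≤ |M (k + 1) ω - S (k + 1) ω| + |S (k + 1) ω - S k ω| + |S k ω - M k ω| := htri
    _ ≤ c / t * S (k + 1) ω + x * Real.exp σ * S k ω + c / t * S k ω := by
        exact add_le_add (add_le_add hω2 hdiff) hω1'
    _ ≤ c / t * (Real.exp σ * S k ω) + σ / t * Real.exp σ * S k ω + c / t * S k ω := by
        gcongr
    _ = ((c + σ) * Real.exp σ + c) / t * S k ω := by ring
end

section
/- Let σ > 0 and define for each n the random variable L_n = (σ/√n) Σ_{j=1}^{n} ξ_j where ξ_j are the coordinate maps on {−1,1}^∞ with the symmetric product measure. Let α_n(k) be uniformly bounded adapted processes, and suppose Y_n(t) = Σ_{j=1}^{[nt]} (M_n(j)−M_n(j−1))/S_n(j−1) with M_n(j) = S_n(j)(1 + ξ_j α_n(j) n^{−1/2}) and S_n(j) = s₀ exp(σ n^{−1/2} Σ_{i≤j} ξ_i). Then there exists a constant c₃ (depending only on σ, s₀, and the bound on α_n) such that for all n and all t ∈ [0,1], |Y_n(t) − (σ/√n)Σ_{j=1}^{[nt]} ξ_j − (σ/(2n))(σ[nt]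 + 2Σ_{j=1}^{[nt]} α_n(j))| ≤ c₃/√n almost surely. -/
lemma cubic_bound (x : ℝ) (hx : |x| ≤ 1) : |Real.exp x - (1 + x + x^2/2)| ≤ |x|^3 := by
  have h := Real.exp_bound hx (by norm_num : 0 < 3)
  have hs : ∑ m ∈ Finset.range 3, x^m / m.factorial = 1 + x + x^2/2 := by
    simp [Finset.sum_range_succ, Nat.factorial]
  rw [hs] at h
  refine h.trans ?_
  have : ((Nat.succ 3 : ℕ) : ℝ) / ((Nat.factorial 3 : ℕ) * (3:ℕ)) ≤ 1 := by
    norm_num [Nat.factorial]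
  nlinarith [pow_nonneg (abs_nonneg x) 3]

set_option maxHeartbeats 1000000 in
/-- Summed Taylor estimate: with `S j = s₀ exp(σ n^{−1/2} Σ_{i≤j} ξ_i)`,
`M j = S j (1 + ξ_j α_j n^{−1/2})`, `ξ_i ∈ {−1,1}` and `|α j| ≤ K`, there is a constant
`c₃` depending only on `σ, s₀, K` such that for all `n ≥ 1` and `t ∈ [0,1]`,
`|Y_n(t) − (σ/√n) Σ_{j≤[nt]} ξ_j − (σ/(2n))(σ[nt] + 2Σ_{j≤[nt]} α_j)| ≤ c₃/√n`, where
`Y_n(t) = Σ_{j=1}^{[nt]} (M j − M (j−1))/S (j−1)`. -/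
theorem summed_taylor_estimate (σ s₀ K : ℝ) (hσ : 0 < σ) (hs₀ : 0 < s₀) (hK : 0 < K) :
    ∃ c₃ : ℝ, 0 < c₃ ∧ ∀ n : ℕ, 1 ≤ n →
      ∀ ξ α : ℕ → ℝ, (∀ i, ξ i = 1 ∨ ξ i = -1) → (∀ j, |α j| ≤ K) →
      ∀ S M : ℕ → ℝ,
      (∀ j, S j = s₀ * Real.exp (σ / Real.sqrt n * ∑ i ∈ Finset.range j, ξ (i + 1))) →
      (∀ j, M j = S j * (1 + ξ j * α j / Real.sqrt n)) →
      ∀ t : ℝ, 0 ≤ t → t ≤ 1 →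
      |(∑ j ∈ Finset.range ⌊(n : ℝ) * t⌋₊, (M (j + 1) - M j) / S j)
          - σ / Real.sqrt n * ∑ j ∈ Finset.range ⌊(n : ℝ) * t⌋₊, ξ (j + 1)
          - σ / (2 * n) * (σ * (⌊(n : ℝ) * t⌋₊ : ℝ)
              + 2 * ∑ j ∈ Finset.range ⌊(n : ℝ) * t⌋₊, α (j + 1))|
        ≤ c₃ / Real.sqrt n := by
  set C₀ : ℝ := (Real.exp σ + 1 + σ + σ^2 + σ^3) * (1+K) + σ^2*K with hC₀def
  have hC₀ : 0 < C₀ := by positivity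
  refine ⟨2*K + (1+σ^3)*C₀, by positivity, ?_⟩
  intro n hn ξ α hξ hα S M hS hM t ht0 ht1
  set r := Real.sqrt n with hrdef
  have hn1 : (1:ℝ) ≤ n := by exact_mod_cast hn
  have hr1 : 1 ≤ r := by
    rw [hrdef, show (1:ℝ) = Real.sqrt 1 by simp]
    exact Real.sqrt_le_sqrt hn1
  have hr0 : 0 < r := lt_of_lt_of_le one_pos hr1
  have hr2 : r * r = n := Real.mul_self_sqrt (by positivity)
  set m := ⌊(n : ℝ) * t⌋₊ with hm
  have hmn : (m:ℝ) ≤ n := by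
    have h1 : (n:ℝ)*t ≤ n := by nlinarith
    have h2 := Nat.floor_le (by positivity : (0:ℝ) ≤ (n:ℝ)*t)
    rw [hm]; linarith
  have hξ1 : ∀ i, ξ i * ξ i = 1 := by
    intro i; rcases hξ i with h | h <;> rw [h] <;> norm_num
  have hξa : ∀ i, |ξ i| = 1 := by
    intro i; rcases hξ i with h | h <;> rw [h] <;> norm_num
  set x : ℕ → ℝ := fun j => σ / r * ξ (j+1) with hxdef
  set g : ℕ → ℝ := fun j => ξ j * α j / r with hgdef
  set D : ℕ → ℝ := fun j =>
    (Real.exp (x j) - (1 + x j + (x j)^2/2)) * (1 + g (j+1)) + (x j)^2 * g (j+1) / 2 with hDdef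
  have hSpos : ∀ j, 0 < S j := fun j => by rw [hS]; positivity
  have hx2 : ∀ j, (x j)^2 = σ^2 / n := by
    intro j
    simp only [hxdef]
    rw [mul_pow, div_pow, show ξ (j+1)^2 = 1 by rw [sq]; exact hξ1 _,
      show r^2 = (n:ℝ) by rw [sq]; exact hr2, mul_one]
  have hxabs : ∀ j, |x j| = σ / r := by
    intro j
    simp only [hxdef]
    rw [abs_mul, abs_div, abs_of_pos hσ, abs_of_pos hr0, hξa, mul_one]
  have hgb : ∀ j, |g j| ≤ K / r := by
    intro j
    simp only [hgdef]
    rw [abs_div, abs_mul, hξa, one_mul, abs_of_pos hr0]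
    gcongr
    exact hα j
  -- per-term identity
  have key : ∀ j, (M (j+1) - M j) / S j - σ / r * ξ (j+1)
      - (σ^2/(2*n) + σ * α (j+1) / n) = D j + (g (j+1) - g j) := by
    intro j
    have hstep : S (j+1) = S j * Real.exp (x j) := by
      rw [hS, hS, Finset.sum_range_succ, mul_add, Real.exp_add]
      simp only [hxdef]
      ring
    have h1 : (M (j+1) - M j) / S j = Real.exp (x j) * (1 + g (j+1)) - (1 + g j) := by
      rw [hM, hM, hstep]
      simp only [hgdef]
      field_simp [(hSpos j).ne', hr0.ne']
    have hxg : x j * g (j+1) = σ * α (j+1) / n := by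
      simp only [hxdef, hgdef]
      rw [← hr2]
      field_simp
      ring_nf
      rw [show ξ (1+j)^2 = 1 by rw [sq]; exact hξ1 _]
      ring
    rw [h1]
    simp only [hDdef, hxdef, hgdef] at *
    linear_combination (hx2 j) / 2 + hxg
  have hn0 : (n:ℝ) ≠ 0 := by positivity
  have expand : σ/(2*(n:ℝ))*(σ*(m:ℝ) + 2*∑ j ∈ Finset.range m, α (j+1))
      = ∑ j ∈ Finset.range m, (σ^2/(2*(n:ℝ)) + σ * α (j+1) / n) := by
    rw [Finset.sum_add_distrib, Finset.sum_const, Finset.card_range,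
      show (∑ j ∈ Finset.range m, σ * α (j+1) / (n:ℝ))
          = (σ/n) * ∑ j ∈ Finset.range m, α (j+1) by
        rw [Finset.mul_sum]; exact Finset.sum_congr rfl fun j _ => by ring]
    simp only [nsmul_eq_mul]
    field_simp
  have main : (∑ j ∈ Finset.range m, (M (j+1) - M j) / S j)
      - σ / r * ∑ j ∈ Finset.range m, ξ (j+1)
      - σ / (2*(n:ℝ)) * (σ * (m:ℝ) + 2 * ∑ j ∈ Finset.range m, α (j+1))
      = (∑ j ∈ Finset.range m, D j) + (g m - g 0) := by
    rw [expand, Finset.mul_sum, ← Finset.sum_sub_distrib, ← Finset.sum_sub_distrib,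
      Finset.sum_congr rfl fun j _ => key j, Finset.sum_add_distrib, Finset.sum_range_sub]
  have hDsum : ∑ j ∈ Finset.range m, |D j| ≤ (1+σ^3)*C₀/r := by
    rcases le_or_gt σ r with hc | hc
    · have hb : ∀ j, |D j| ≤ C₀/((n:ℝ)*r) := by
        intro j
        have hx1 : |x j| ≤ 1 := by rw [hxabs]; exact (div_le_one hr0).2 hc
        have hR := cubic_bound (x j) hx1
        rw [hxabs] at hR
        have hr3 : (σ/r)^3 = σ^3/((n:ℝ)*r) := by
          rw [div_pow, show r^3 = (n:ℝ)*r by rw [pow_succ, sq, hr2]]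
        have hgK : |g (j+1)| ≤ K := (hgb (j+1)).trans (div_le_self hK.le hr1)
        have h1 : |D j| ≤ |Real.exp (x j) - (1 + x j + (x j)^2/2)| * |1 + g (j+1)|
            + (x j)^2 * |g (j+1)| / 2 := by
          simp only [hDdef]
          refine (abs_add_le _ _).trans ?_
          rw [abs_mul, abs_div, abs_mul, abs_of_nonneg (sq_nonneg (x j))]
          norm_num
        have h2 : |1 + g (j+1)| ≤ 1 + K := (abs_add_le _ _).trans (by simp [hgK])
        have h3 : (x j)^2 = σ^2/(n:ℝ) := hx2 j
        have hnr : 0 < (n:ℝ)*r := by positivity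
        calc |D j| ≤ (σ^3/((n:ℝ)*r)) * (1+K) + (σ^2/(n:ℝ)) * (K/r) / 2 := by
              rw [← hr3]
              refine le_trans h1 (add_le_add (mul_le_mul hR h2 (abs_nonneg _)
                (by positivity)) ?_)
              rw [h3]; gcongr
              exact hgb _
          _ = (σ^3*(1+K) + σ^2*K/2)/((n:ℝ)*r) := by field_simp
          _ ≤ C₀/((n:ℝ)*r) := by
              gcongr
              rw [hC₀def]
              nlinarith [Real.exp_pos σ, hσ.le, hK.le]
      calc ∑ j ∈ Finset.range m, |D j| ≤ ∑ _j ∈ Finset.range m, C₀/((n:ℝ)*r) :=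
            Finset.sum_le_sum fun j _ => hb j
        _ = (m:ℝ) * (C₀/((n:ℝ)*r)) := by rw [Finset.sum_const, Finset.card_range, nsmul_eq_mul]
        _ ≤ (n:ℝ) * (C₀/((n:ℝ)*r)) :=
            mul_le_mul_of_nonneg_right hmn (by positivity)
        _ = C₀/r := by rw [← mul_div_assoc, mul_div_mul_left _ _ hn0]
        _ ≤ (1+σ^3)*C₀/r := by
            exact (div_le_div_iff_of_pos_right hr0).2 (by nlinarith [pow_pos hσ 3])
    · have hb : ∀ j, |D j| ≤ C₀ := by
        intro j
        have hxσ : |x j| ≤ σ := by rw [hxabs]; exact div_le_self hσ.le hr1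
        have hE : Real.exp (x j) ≤ Real.exp σ :=
          Real.exp_le_exp.2 ((le_abs_self _).trans hxσ)
        have hE0 : 0 < Real.exp (x j) := Real.exp_pos _
        have hsq : (x j)^2 ≤ σ^2 := by
          nlinarith [sq_abs (x j), abs_nonneg (x j)]
        have hR : |Real.exp (x j) - (1 + x j + (x j)^2/2)| ≤ Real.exp σ + 1 + σ + σ^2 := by
          refine (abs_sub _ _).trans ?_
          have h1 : |Real.exp (x j)| ≤ Real.exp σ := by rw [abs_of_pos hE0]; exact hE
          have h2 : |1 + x j + (x j)^2/2| ≤ 1 + σ + σ^2 := by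
            refine (abs_add_le _ _).trans (le_trans (add_le_add ((abs_add_le _ _).trans
              (add_le_add (le_of_eq (abs_one)) hxσ)) ?_) (le_refl _))
            rw [abs_div, abs_of_nonneg (sq_nonneg (x j)), abs_two]
            nlinarith [sq_nonneg (x j)]
          linarith
        have hgK : |g (j+1)| ≤ K := (hgb (j+1)).trans (div_le_self hK.le hr1)
        have h2 : |1 + g (j+1)| ≤ 1 + K := (abs_add_le _ _).trans (by simp [hgK])
        have h1 : |D j| ≤ |Real.exp (x j) - (1 + x j + (x j)^2/2)| * |1 + g (j+1)|
            + (x j)^2 * |g (j+1)| / 2 := by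
          simp only [hDdef]
          refine (abs_add_le _ _).trans ?_
          rw [abs_mul, abs_div, abs_mul, abs_of_nonneg (sq_nonneg (x j))]
          norm_num
        have h3 : (x j)^2 * |g (j+1)| / 2 ≤ σ^2 * K := by
          rw [hx2 j]
          have : σ^2/(n:ℝ) ≤ σ^2 := by
            rw [div_le_iff₀ (by positivity : (0:ℝ) < (n:ℝ))]; nlinarith
          nlinarith [abs_nonneg (g (j+1)), sq_nonneg σ, hK.le, hgK]
        calc |D j| ≤ (Real.exp σ + 1 + σ + σ^2) * (1+K) + σ^2*K := by
              refine h1.trans (add_le_add (mul_le_mul hR h2 (abs_nonneg _)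
                (by positivity)) h3)
          _ ≤ C₀ := by rw [hC₀def]; nlinarith [Real.exp_pos σ, hσ.le, hK.le, pow_pos hσ 3]
      calc ∑ j ∈ Finset.range m, |D j| ≤ ∑ _j ∈ Finset.range m, C₀ :=
            Finset.sum_le_sum fun j _ => hb j
        _ = (m:ℝ) * C₀ := by rw [Finset.sum_const, Finset.card_range, nsmul_eq_mul]
        _ ≤ (1+σ^3)*C₀/r := by
            rw [le_div_iff₀ hr0]
            have h4 : (m:ℝ)*C₀*r ≤ ((n:ℝ))*C₀*r :=
              mul_le_mul_of_nonneg_right (mul_le_mul_of_nonneg_right hmn hC₀.le) hr0.le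
            have h5 : ((n:ℝ))*C₀*r ≤ σ^3*C₀ := by
              rw [← hr2]
              have h6 : r*r ≤ σ*σ := by nlinarith
              have hcube : r*r*r ≤ σ^3 := by nlinarith [h6, hr0.le, hc.le, hσ.le]
              nlinarith [mul_nonneg (sub_nonneg.2 hcube) hC₀.le]
            nlinarith [hC₀.le]
  calc |(∑ j ∈ Finset.range m, (M (j + 1) - M j) / S j)
          - σ / r * ∑ j ∈ Finset.range m, ξ (j + 1)
          - σ / (2 * (n:ℝ)) * (σ * (m : ℝ) + 2 * ∑ j ∈ Finset.range m, α (j + 1))|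
      = |(∑ j ∈ Finset.range m, D j) + (g m - g 0)| := by rw [main]
    _ ≤ (∑ j ∈ Finset.range m, |D j|) + (|g m| + |g 0|) :=
        (abs_add_le _ _).trans (add_le_add (Finset.abs_sum_le_sum_abs _ _) (abs_sub _ _))
    _ ≤ (1+σ^3)*C₀/r + (K/r + K/r) := add_le_add hDsum (add_le_add (hgb m) (hgb 0))
    _ = (2*K + (1+σ^3)*C₀)/r := by field_simp; ring
end
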